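/- Let A ∈ ℝ^{d×d} be a regular row-stochastic matrix, i.e. A is row-stochastic and A_* = lim_{k→∞} A^k exists. Then for every α ∈ (0,1) the matrix I − αA is invertible, and lim_{α→1⁻} (1 − α)(I − αA)^{-1} = A_*. -/

import Mathlib

open Filter


lemma abel_mean_tendsto {E : Type*} [NormedAddCommGroup E] [NormedSpace ℝ E] [CompleteSpace E]
    (a : ℕ → E) (L : E) (C : ℝ) (hC : ∀ k, ‖a k - L‖ ≤ C)
    (ha : Tendsto a atTop (nhds L)) :
    Tendsto (fun α : ℝ => ∑' k, ((1 - α) * α ^ k) • a k)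
      (nhdsWithin 1 (Set.Ioo (0:ℝ) 1)) (nhds L) := by
  have hC0 : 0 ≤ C := le_trans (norm_nonneg _) (hC 0)
  rw [Metric.tendsto_nhdsWithin_nhds]
  intro ε hε
  obtain ⟨N, hN⟩ := (Metric.tendsto_atTop.1 ha (ε/4) (by positivity))
  refine ⟨min 1 (ε/2 / (N*C+1)), lt_min one_pos (by positivity), ?_⟩
  rintro α ⟨hα0, hα1⟩ hdist
  have hd : dist α 1 = 1 - α := by
    rw [Real.dist_eq, abs_of_neg (by linarith : α - 1 < 0)]; ring
  have h1α : 0 < 1 - α := by linarith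
  have hgeo : Summable fun k : ℕ => α ^ k := summable_geometric_of_lt_one hα0.le hα1
  have hw : ∀ k : ℕ, 0 ≤ (1 - α) * α ^ k := fun k => by positivity
  have hwsum : Summable fun k : ℕ => (1 - α) * α ^ k := hgeo.mul_left _
  have hwtot : ∑' k : ℕ, (1 - α) * α ^ k = 1 := by
    rw [tsum_mul_left, tsum_geometric_of_lt_one hα0.le hα1]
    field_simp
  have hnorm : ∀ k : ℕ, ‖((1 - α) * α ^ k) • (a k - L)‖ = ((1-α) * α^k) * ‖a k - L‖ := by
    intro k
    rw [norm_smul, Real.norm_of_nonneg (hw k)]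
  have hSnorm : Summable fun k : ℕ => ((1-α) * α^k) * ‖a k - L‖ := by
    apply Summable.of_nonneg_of_le (fun k => by positivity)
      (fun k => mul_le_mul_of_nonneg_left (hC k) (hw k))
    exact hwsum.mul_right _
  have hS : Summable fun k : ℕ => ((1 - α) * α ^ k) • (a k - L) := by
    apply Summable.of_norm
    simpa only [hnorm] using hSnorm
  have hSL : Summable fun k : ℕ => ((1 - α) * α ^ k) • L := hwsum.smul_const L
  have hSa : Summable fun k : ℕ => ((1 - α) * α ^ k) • a k := by
    have := hS.add hSL
    simpa [smul_sub, sub_add_cancel] using this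
  have key : (∑' k, ((1 - α) * α ^ k) • a k) - L = ∑' k, ((1 - α) * α ^ k) • (a k - L) := by
    have : ∑' k, ((1 - α) * α ^ k) • (a k - L)
        = (∑' k, ((1 - α) * α ^ k) • a k) - ∑' k, ((1 - α) * α ^ k) • L := by
      rw [← Summable.tsum_sub hSa hSL]
      exact tsum_congr fun k => by rw [smul_sub]
    rw [this, Summable.tsum_smul_const hwsum, hwtot, one_smul]
  rw [dist_eq_norm, key]
  have hb1 : ‖∑' k, ((1 - α) * α ^ k) • (a k - L)‖ ≤ ∑' k, ((1-α) * α^k) * ‖a k - L‖ := by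
    have := norm_tsum_le_tsum_norm (by simpa only [hnorm] using hSnorm :
      Summable fun k : ℕ => ‖((1 - α) * α ^ k) • (a k - L)‖)
    simpa only [hnorm] using this
  -- split the sum at N
  have hsplit := Summable.sum_add_tsum_nat_add N hSnorm
  have hhead : ∑ i ∈ Finset.range N, ((1-α) * α^i) * ‖a i - L‖ ≤ N * C * (1 - α) := by
    calc ∑ i ∈ Finset.range N, ((1-α) * α^i) * ‖a i - L‖
        ≤ ∑ i ∈ Finset.range N, (1-α) * C := by
          refine Finset.sum_le_sum fun i _ => ?_
          have hαi : α ^ i ≤ 1 := pow_le_one₀ hα0.le hα1.le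
          have := mul_le_mul_of_nonneg_left (hC i) (hw i)
          calc ((1-α) * α^i) * ‖a i - L‖ ≤ ((1-α) * α^i) * C := this
            _ ≤ (1-α) * C :=
              mul_le_mul_of_nonneg_right (mul_le_of_le_one_right h1α.le hαi) hC0
      _ = N * C * (1 - α) := by rw [Finset.sum_const, Finset.card_range]; ring
  have htail : ∑' k : ℕ, ((1-α) * α^(k+N)) * ‖a (k+N) - L‖ ≤ ε/4 := by
    have hwtail : Summable fun k : ℕ => (1 - α) * α ^ (k + N) :=
      (summable_nat_add_iff (f := fun k : ℕ => (1 - α) * α ^ k) N).2 hwsum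
    have hstail : Summable fun k : ℕ => ((1-α) * α^(k+N)) * ‖a (k+N) - L‖ :=
      (summable_nat_add_iff (f := fun k : ℕ => ((1-α) * α^k) * ‖a k - L‖) N).2 hSnorm
    have h1 : ∑' k : ℕ, ((1-α) * α^(k+N)) * ‖a (k+N) - L‖
        ≤ ∑' k : ℕ, ((1-α) * α^(k+N)) * (ε/4) := by
      refine Summable.tsum_le_tsum (fun k => ?_) hstail (hwtail.mul_right _)
      refine mul_le_mul_of_nonneg_left (le_of_lt ?_) (hw (k+N))
      have := hN (k+N) (Nat.le_add_left N k)
      rwa [dist_eq_norm] at this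
    have h2 : ∑' k : ℕ, ((1-α) * α^(k+N)) * (ε/4) ≤ ε/4 := by
      rw [tsum_mul_right]
      have hto : ∑' k : ℕ, (1 - α) * α ^ (k + N) ≤ 1 := by
        have := Summable.sum_add_tsum_nat_add N hwsum
        have hpos : 0 ≤ ∑ i ∈ Finset.range N, (1 - α) * α ^ i :=
          Finset.sum_nonneg fun i _ => hw i
        nlinarith [hwtot]
      nlinarith
    linarith
  have hδ : 1 - α < ε/2 / (N*C+1) := by
    rw [hd] at hdist; exact lt_of_lt_of_le hdist (min_le_right _ _)
  have hNC : N * C * (1 - α) < ε/2 := by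
    have h1 : (N*C+1) * (1 - α) < (N*C+1) * (ε/2 / (N*C+1)) := by
      apply mul_lt_mul_of_pos_left hδ (by positivity)
    rw [mul_div_cancel₀] at h1
    · nlinarith
    · positivity
  calc ‖∑' k, ((1 - α) * α ^ k) • (a k - L)‖
      ≤ ∑' k, ((1-α) * α^k) * ‖a k - L‖ := hb1
    _ = (∑ i ∈ Finset.range N, ((1-α) * α^i) * ‖a i - L‖)
        + ∑' k : ℕ, ((1-α) * α^(k+N)) * ‖a (k+N) - L‖ := hsplit.symm
    _ < ε := by linarith


section
variable {d : ℕ}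

lemma row_stochastic_linfty_norm_le (B : Matrix (Fin d) (Fin d) ℝ)
    (h0 : ∀ i j, 0 ≤ B i j) (h1 : ∀ i, ∑ j, B i j = 1) :
    @norm _ (Matrix.linftyOpNormedRing.toNorm) B ≤ 1 := by
  letI : NormedRing (Matrix (Fin d) (Fin d) ℝ) := Matrix.linftyOpNormedRing
  rw [Matrix.linfty_opNorm_def]
  have key : (Finset.univ.sup fun i => ∑ j, ‖B i j‖₊ : NNReal) ≤ 1 := by
    refine Finset.sup_le fun i _ => ?_
    rw [← NNReal.coe_le_coe]
    push_cast
    calc (∑ j, (‖B i j‖₊ : ℝ)) = ∑ j, B i j :=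
          Finset.sum_congr rfl fun j _ => by
            rw [coe_nnnorm, Real.norm_of_nonneg (h0 i j)]
      _ ≤ 1 := by rw [h1 i]
  exact_mod_cast key

lemma row_stochastic_pow (A : Matrix (Fin d) (Fin d) ℝ)
    (hA0 : ∀ i j, 0 ≤ A i j) (hA1 : ∀ i, ∑ j, A i j = 1) (k : ℕ) :
    (∀ i j, 0 ≤ (A ^ k) i j) ∧ (∀ i, ∑ j, (A ^ k) i j = 1) := by
  induction k with
  | zero =>
    constructor
    · intro i j
      simp [Matrix.one_apply]
      split <;> norm_num
    · intro i
      simp [Matrix.one_apply]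
  | succ k ih =>
    constructor
    · intro i j
      rw [pow_succ, Matrix.mul_apply]
      exact Finset.sum_nonneg fun l _ => mul_nonneg (ih.1 i l) (hA0 l j)
    · intro i
      rw [pow_succ]
      simp only [Matrix.mul_apply]
      rw [Finset.sum_comm]
      calc ∑ l, ∑ j, (A ^ k) i l * A l j = ∑ l, (A ^ k) i l * ∑ j, A l j := by
            simp [Finset.mul_sum]
        _ = 1 := by simp [hA1, ih.2 i]

end


/-- if A is a regular row-stochastic matrix with A_* = lim A^k, then for
every α ∈ (0,1) the matrix I - αA is invertible, and (1-α)(I-αA)⁻¹ → A_* as α → 1⁻. -/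
theorem regular_stochastic_resolvent_limit {d : ℕ}
    (A : Matrix (Fin d) (Fin d) ℝ)
    (hA0 : ∀ i j, 0 ≤ A i j) (hA1 : ∀ i, ∑ j, A i j = 1)
    (Astar : Matrix (Fin d) (Fin d) ℝ)
    (hreg : Tendsto (fun k => A ^ k) atTop (nhds Astar)) :
    (∀ α : ℝ, α ∈ Set.Ioo (0 : ℝ) 1 → IsUnit (1 - α • A)) ∧
    Tendsto (fun α : ℝ => (1 - α) • (1 - α • A)⁻¹)
      (nhdsWithin 1 (Set.Ioo (0 : ℝ) 1)) (nhds Astar) := by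
  letI : SeminormedRing (Matrix (Fin d) (Fin d) ℝ) := Matrix.linftyOpSemiNormedRing
  letI : NormedRing (Matrix (Fin d) (Fin d) ℝ) := Matrix.linftyOpNormedRing
  letI : NormedAlgebra ℝ (Matrix (Fin d) (Fin d) ℝ) := Matrix.linftyOpNormedAlgebra
  have hAle : ‖A‖ ≤ 1 := row_stochastic_linfty_norm_le A hA0 hA1
  have hpow : ∀ k : ℕ, ‖A ^ k‖ ≤ 1 := fun k => by
    obtain ⟨h0, h1⟩ := row_stochastic_pow A hA0 hA1 k
    exact row_stochastic_linfty_norm_le _ h0 h1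
  have hsm : ∀ α : ℝ, α ∈ Set.Ioo (0:ℝ) 1 → ‖α • A‖ < 1 := by
    rintro α ⟨hα0, hα1⟩
    rw [norm_smul, Real.norm_of_nonneg hα0.le]
    calc α * ‖A‖ ≤ α * 1 := mul_le_mul_of_nonneg_left hAle hα0.le
      _ < 1 := by rwa [mul_one]
  have hunit : ∀ α : ℝ, α ∈ Set.Ioo (0:ℝ) 1 → IsUnit (1 - α • A) := fun α hα =>
    (Units.oneSub _ (hsm α hα)).isUnit
  refine ⟨hunit, ?_⟩
  have hCbd : ∀ k : ℕ, ‖A ^ k - Astar‖ ≤ 1 + ‖Astar‖ := fun k =>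
    (norm_sub_le _ _).trans (by linarith [hpow k])
  have habel := abel_mean_tendsto (fun k => A ^ k) Astar (1 + ‖Astar‖) hCbd hreg
  refine Tendsto.congr' ?_ habel
  filter_upwards [self_mem_nhdsWithin] with α hα
  obtain ⟨hα0, hα1⟩ := hα
  have hsum : Summable fun k : ℕ => (α • A) ^ k :=
    summable_geometric_of_norm_lt_one (hsm α ⟨hα0, hα1⟩)
  have hinv : (1 - α • A)⁻¹ = ∑' k : ℕ, (α • A) ^ k := by
    rw [Matrix.nonsing_inv_eq_ringInverse]
    exact (geom_series_eq_inverse _ (hsm α ⟨hα0, hα1⟩)).symm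
  calc ∑' k : ℕ, ((1 - α) * α ^ k) • A ^ k
      = ∑' k : ℕ, (1 - α) • (α • A) ^ k :=
        tsum_congr fun k => by rw [smul_pow, smul_smul]
    _ = (1 - α) • ∑' k : ℕ, (α • A) ^ k := Summable.tsum_const_smul _ hsum
    _ = (1 - α) • (1 - α • A)⁻¹ := by rw [hinv]
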